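/- Let T be a contraction on a Banach space and λ ∈ σ(T) with |λ| = 1. Then |λ - 1| ≤ ω_T, where ω_T = inf over ε > 0 of the modified Apostol modulus φ̃_T(ε) = sup{‖x - Tx‖ : ‖x‖ ≤ 1, 1 - ‖Tx‖ ≤ ε}. (Amplitude of the boundary spectrum is bounded by ω_T.) -/

import Mathlib

theorem stmt16 {X : Type*} [NormedAddCommGroup X] [NormedSpace ℂ X] [CompleteSpace X]
    (T : X →L[ℂ] X) (hT : ‖T‖ = 1)
    (lam : ℂ) (hlam : lam ∈ spectrum ℂ T) (habs : ‖lam‖ = 1) :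
    ‖lam - 1‖ ≤
      sInf {c : ℝ | ∃ ε : ℝ, 0 < ε ∧
        c = sSup {r : ℝ | ∃ x : X, ‖x‖ ≤ 1 ∧ 1 - ‖T x‖ ≤ ε ∧ r = ‖x - T x‖}} := by
  haveI : Nontrivial X := by
    by_contra h
    rw [not_nontrivial_iff_subsingleton] at h
    have hT0 : T = 0 := Subsingleton.elim _ _
    rw [hT0, norm_zero] at hT
    exact zero_ne_one hT
  have key : ∀ δ : ℝ, 0 < δ → ∃ v : X, ‖v‖ ≤ 1 ∧ 1 - ‖T v‖ ≤ 3*δ ∧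
      ‖lam - 1‖ - 3*δ ≤ ‖v - T v‖ := by
    intro δ hδ
    set μ : ℂ := ((1 + δ : ℝ) : ℂ) * lam with hμ
    have hμabs : ‖μ‖ = 1 + δ := by
      rw [hμ, norm_mul, habs, mul_one, Complex.norm_real, Real.norm_eq_abs, abs_of_pos (by linarith)]
    have hres : μ ∈ resolventSet ℂ T := by
      apply spectrum.mem_resolventSet_of_norm_lt
      rw [hT, hμabs]; linarith
    have hu : IsUnit (algebraMap ℂ (X →L[ℂ] X) μ - T) := hres
    obtain ⟨u, hu_eq⟩ := hu
    set R : X →L[ℂ] X := (↑u⁻¹ : X →L[ℂ] X) with hR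
    have hdiff : ‖lam - μ‖ = δ := by
      have : lam - μ = -(δ : ℂ) * lam := by rw [hμ]; push_cast; ring
      rw [this, norm_mul, habs, mul_one, norm_neg, Complex.norm_real, Real.norm_eq_abs,
        abs_of_pos hδ]
    have hRnorm : 1/δ ≤ ‖R‖ := by
      by_contra h
      push_neg at h
      have hRpos : 0 < ‖R‖ := by
        rcases eq_or_lt_of_le (norm_nonneg R) with h0 | h0
        · exfalso
          have : (↑u * ↑u⁻¹ : X →L[ℂ] X) = 1 := u.mul_inv
          rw [← hR] at this
          have hR0 : R = 0 := by rwa [eq_comm, norm_eq_zero] at h0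
          rw [hR0, mul_zero] at this
          exact one_ne_zero this.symm
        · exact h0
      have hδR : δ < ‖R‖⁻¹ := by
        rw [← inv_inv δ]
        exact inv_strictAnti₀ hRpos (by rwa [one_div] at h)
      set t : X →L[ℂ] X := algebraMap ℂ (X →L[ℂ] X) (lam - μ) with ht
      have htnorm : ‖t‖ ≤ δ := by
        rw [ht, norm_algebraMap', hdiff]
      have hunit := (u.add t (lt_of_le_of_lt htnorm hδR)).isUnit
      rw [Units.val_add, hu_eq, ht] at hunit
      have : algebraMap ℂ (X →L[ℂ] X) μ - T + algebraMap ℂ (X →L[ℂ] X) (lam - μ)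
          = algebraMap ℂ (X →L[ℂ] X) lam - T := by
        rw [map_sub]; abel
      rw [this] at hunit
      exact (spectrum.mem_iff.mp hlam) hunit
    have h2δ : 1/(2*δ) < ‖R‖ := lt_of_lt_of_le (by
      rw [div_lt_div_iff₀ (by linarith) hδ]; nlinarith) hRnorm
    obtain ⟨x, hx1, hx2⟩ := R.exists_lt_apply_of_lt_opNorm h2δ
    set z : X := R x with hz
    have hzpos : 0 < ‖z‖ := lt_trans (by positivity) hx2
    have hzinv : ‖z‖⁻¹ < 2*δ := by
      rw [inv_lt_comm₀ hzpos (by linarith)]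
      rwa [one_div] at hx2
    -- (μ • z - T z) = x
    have happ : μ • z - T z = x := by
      have h1 : (↑u * ↑u⁻¹ : X →L[ℂ] X) = 1 := u.mul_inv
      have h2 : (algebraMap ℂ (X →L[ℂ] X) μ - T) (R x) = x := by
        rw [← hu_eq]
        calc (↑u : X →L[ℂ] X) ((↑u⁻¹ : X →L[ℂ] X) x)
            = ((↑u * ↑u⁻¹ : X →L[ℂ] X)) x := rfl
          _ = x := by rw [h1]; rfl
      simpa [ContinuousLinearMap.sub_apply, ContinuousLinearMap.smul_apply,
        Algebra.algebraMap_eq_smul_one, ContinuousLinearMap.smul_apply,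
        ContinuousLinearMap.one_apply] using h2
    set v : X := ‖z‖⁻¹ • z with hv
    have hvnorm : ‖v‖ = 1 := by
      rw [hv, norm_smul, norm_inv, norm_norm, inv_mul_cancel₀ (ne_of_gt hzpos)]
    have hev : ‖lam • v - T v‖ ≤ 3*δ := by
      have hlamz : lam • z - T z = x + (lam - μ) • z := by
        rw [sub_smul]; rw [← happ]; abel
      have h3 : ‖lam • z - T z‖ ≤ 1 + δ * ‖z‖ := by
        rw [hlamz]
        calc ‖x + (lam - μ) • z‖ ≤ ‖x‖ + ‖(lam - μ) • z‖ := norm_add_le _ _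
          _ ≤ 1 + δ * ‖z‖ := by
              rw [norm_smul, hdiff]
              exact add_le_add (le_of_lt hx1) le_rfl
      have h4 : lam • v - T v = ‖z‖⁻¹ • (lam • z - T z) := by
        rw [hv, T.map_smul_of_tower, smul_sub, smul_comm]
      rw [h4, norm_smul, norm_inv, norm_norm]
      calc ‖z‖⁻¹ * ‖lam • z - T z‖ ≤ ‖z‖⁻¹ * (1 + δ * ‖z‖) := by
            apply mul_le_mul_of_nonneg_left h3 (by positivity)
        _ = ‖z‖⁻¹ + δ := by field_simp
        _ ≤ 3*δ := by linarith
    refine ⟨v, le_of_eq hvnorm, ?_, ?_⟩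
    · have : ‖lam • v‖ - ‖T v‖ ≤ ‖lam • v - T v‖ := norm_sub_norm_le _ _
      rw [norm_smul, habs, one_mul, hvnorm] at this
      linarith
    · have h5 : ‖v - lam • v‖ - ‖lam • v - T v‖ ≤ ‖v - T v‖ := by
        have h8 : ‖v - lam • v‖ ≤ ‖v - T v‖ + ‖lam • v - T v‖ := by
          have heq : v - lam • v = (v - T v) - (lam • v - T v) := by abel
          rw [heq]; exact norm_sub_le _ _
        linarith
      have h9 : ‖v - lam • v‖ = ‖lam - 1‖ := by
        have : v - lam • v = (1 - lam) • v := by rw [sub_smul, one_smul]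
        rw [this, norm_smul, hvnorm, mul_one, ← neg_sub lam 1,
          norm_neg]
      linarith [hev, h5, h9.symm.le]
  -- conclude
  apply le_csInf
  · exact ⟨_, 1, one_pos, rfl⟩
  · rintro c ⟨ε, hε, rfl⟩
    set S := {r : ℝ | ∃ x : X, ‖x‖ ≤ 1 ∧ 1 - ‖T x‖ ≤ ε ∧ r = ‖x - T x‖} with hS
    have hbdd : BddAbove S := by
      refine ⟨2, ?_⟩
      rintro r ⟨x, hx1, _, rfl⟩
      calc ‖x - T x‖ ≤ ‖x‖ + ‖T x‖ := norm_sub_le _ _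
        _ ≤ 1 + ‖T‖ * ‖x‖ := add_le_add hx1 (T.le_opNorm x)
        _ ≤ 2 := by rw [hT]; linarith
    have hstep : ∀ η : ℝ, 0 < η → ‖lam - 1‖ - η ≤ sSup S := by
      intro η hη
      set δ := min (η/3) (ε/3) with hδdef
      have hδpos : 0 < δ := lt_min (by linarith) (by linarith)
      obtain ⟨v, hv1, hv2, hv3⟩ := key δ hδpos
      have hmem : ‖v - T v‖ ∈ S := ⟨v, hv1, le_trans hv2 (by
        have : δ ≤ ε/3 := min_le_right _ _
        linarith), rfl⟩
      have : ‖lam - 1‖ - η ≤ ‖lam - 1‖ - 3*δ := by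
        have : δ ≤ η/3 := min_le_left _ _
        linarith
      exact le_trans this (le_trans hv3 (le_csSup hbdd hmem))
    by_contra h
    push_neg at h
    have := hstep ((‖lam - 1‖ - sSup S)/2) (by linarith)
    linarith
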